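/- Let X be a metric space, let μ₀ be a Borel probability measure on X with an Onsager–Machlup functional I₀ : E → ℝ on E ⊆ supp(μ₀) for which property M(μ₀, E) holds, and let Φ : X → ℝ be locally uniformly continuous. Suppose Z := ∫_X exp(−Φ(x)) dμ₀(x) ∈ (0, ∞) and define the Borel probability measure μ by μ(A) = Z⁻¹ ∫_A exp(−Φ(x)) dμ₀(x). Then property M(μ, E) holds, i.e. there exists x⋆ ∈ E such that for every x ∈ X ∖ E, lim_{r→0} μ(B(x,r))/μ(B(x⋆,r)) = 0. -/

import Mathlib

open MeasureTheory Metric Filter Set Topology ENNReal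

noncomputable section

/-- The topological support of a Borel measure on a metric space: the set of points all of
whose open balls have positive measure. -/
def measureSupport {X : Type*} [PseudoMetricSpace X] [MeasurableSpace X]
    (μ : Measure X) : Set X :=
  {x | ∀ r > 0, 0 < μ (Metric.ball x r)}

/-- `I` is an Onsager--Machlup functional for `μ` on `E`: for all `x₁ x₂ ∈ E`, the ratio of
small-ball probabilities tends to `exp (I x₂ - I x₁)` as the radius tends to `0⁺`. -/
def IsOMFunctional {X : Type*} [PseudoMetricSpace X] [MeasurableSpace X]
    (μ : Measure X) (E : Set X) (I : X → ℝ) : Prop :=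
  ∀ x₁ ∈ E, ∀ x₂ ∈ E,
    Filter.Tendsto (fun r : ℝ => μ (Metric.ball x₁ r) / μ (Metric.ball x₂ r))
      (𝓝[>] 0) (𝓝 (ENNReal.ofReal (Real.exp (I x₂ - I x₁))))

/-- Property `M(μ, E)`: there is `x⋆ ∈ E` such that for every `x ∉ E` the small-ball
probability ratio `μ(B(x,r)) / μ(B(x⋆,r))` tends to `0` as `r → 0⁺`. -/
def PropertyM {X : Type*} [PseudoMetricSpace X] [MeasurableSpace X]
    (μ : Measure X) (E : Set X) : Prop :=
  ∃ xs ∈ E, ∀ x ∉ E,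
    Filter.Tendsto (fun r : ℝ => μ (Metric.ball x r) / μ (Metric.ball xs r)) (𝓝[>] 0) (𝓝 0)

/-- `f` is locally uniformly continuous: near every `x` there is an increasing local modulus
of continuity `ω : [0,∞) → [0,∞]` with `ω(r) → 0` as `r → 0` and
`dist (f x′) (f x) ≤ ω (dist x′ x)` for all `x′`. -/
def LocallyUniformlyContinuous {X Y : Type*} [PseudoMetricSpace X] [PseudoMetricSpace Y]
    (f : X → Y) : Prop :=
  ∀ x : X, ∃ ω : ℝ → ℝ≥0∞,
    (∀ r s : ℝ, 0 ≤ r → r ≤ s → ω r ≤ ω s) ∧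
    Filter.Tendsto ω (𝓝[≥] 0) (𝓝 0) ∧
    ∀ x' : X, ENNReal.ofReal (dist (f x') (f x)) ≤ ω (dist x' x)

theorem M_property_of_reweighted_measure_loc_unif_cts
    {X : Type*} [MetricSpace X] [MeasurableSpace X] [BorelSpace X]
    (μ₀ : Measure X) [IsProbabilityMeasure μ₀]
    (E : Set X) (hEsupp : E ⊆ measureSupport μ₀)
    (I₀ : X → ℝ) (hI₀ : IsOMFunctional μ₀ E I₀)
    (hM : PropertyM μ₀ E)
    (Φ : X → ℝ) (hΦ : LocallyUniformlyContinuous Φ)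
    (Z : ℝ≥0∞) (hZ : Z = ∫⁻ x, ENNReal.ofReal (Real.exp (-Φ x)) ∂μ₀)
    (hZ0 : 0 < Z) (hZtop : Z < ⊤)
    (μ : Measure X)
    (hμ : μ = Z⁻¹ • μ₀.withDensity (fun x => ENNReal.ofReal (Real.exp (-Φ x))))
    [IsProbabilityMeasure μ] :
    PropertyM μ E := by
  obtain ⟨xs, hxsE, hxs⟩ := hM
  refine ⟨xs, hxsE, fun x hx => ?_⟩
  obtain ⟨ωx, hωxm, hωxt, hωxb⟩ := hΦ x
  obtain ⟨ωs, hωsm, hωst, hωsb⟩ := hΦ xs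
  set C : ℝ≥0∞ := ENNReal.ofReal (Real.exp (Φ xs - Φ x + 2)) with hC
  have hCne : C ≠ ⊤ := ENNReal.ofReal_ne_top
  have hmono : nhdsWithin (0:ℝ) (Set.Ioi 0) ≤ nhdsWithin (0:ℝ) (Set.Ici 0) :=
    nhdsWithin_mono 0 Set.Ioi_subset_Ici_self
  have hx1 : ∀ᶠ r in 𝓝[>] (0:ℝ), ωx r < 1 :=
    (hωxt.eventually_lt_const zero_lt_one).filter_mono hmono
  have hs1 : ∀ᶠ r in 𝓝[>] (0:ℝ), ωs r < 1 :=
    (hωst.eventually_lt_const zero_lt_one).filter_mono hmono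
  have key : ∀ᶠ r in 𝓝[>] (0:ℝ),
      μ (ball x r) / μ (ball xs r) ≤ C * (μ₀ (ball x r) / μ₀ (ball xs r)) := by
    filter_upwards [hx1, hs1, self_mem_nhdsWithin] with r hrx hrs hr
    have hr0 : (0:ℝ) < r := hr
    -- upper bound on numerator
    have hup : μ (ball x r) ≤ Z⁻¹ * (ENNReal.ofReal (Real.exp (1 - Φ x)) * μ₀ (ball x r)) := by
      rw [hμ, Measure.smul_apply, smul_eq_mul, withDensity_apply _ measurableSet_ball]
      refine mul_le_mul_right ?_ _
      calc ∫⁻ y in ball x r, ENNReal.ofReal (Real.exp (-Φ y)) ∂μ₀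
          ≤ ∫⁻ _ in ball x r, ENNReal.ofReal (Real.exp (1 - Φ x)) ∂μ₀ := by
            refine setLIntegral_mono' measurableSet_ball fun y hy => ?_
            refine ENNReal.ofReal_le_ofReal (Real.exp_le_exp.2 ?_)
            have h1 : ENNReal.ofReal (dist (Φ y) (Φ x)) ≤ 1 :=
              le_of_lt <| lt_of_le_of_lt
                (le_trans (hωxb y) (hωxm _ _ dist_nonneg (le_of_lt hy))) hrx
            have h2 : |Φ y - Φ x| ≤ 1 := by
              rw [Real.dist_eq] at h1
              exact ENNReal.ofReal_le_one.1 h1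
            linarith [abs_le.1 h2]
        _ = ENNReal.ofReal (Real.exp (1 - Φ x)) * μ₀ (ball x r) := setLIntegral_const _ _
    -- lower bound on denominator
    have hlo : Z⁻¹ * (ENNReal.ofReal (Real.exp (-Φ xs - 1)) * μ₀ (ball xs r)) ≤ μ (ball xs r) := by
      rw [hμ, Measure.smul_apply, smul_eq_mul, withDensity_apply _ measurableSet_ball]
      refine mul_le_mul_right ?_ _
      calc ENNReal.ofReal (Real.exp (-Φ xs - 1)) * μ₀ (ball xs r)
          = ∫⁻ _ in ball xs r, ENNReal.ofReal (Real.exp (-Φ xs - 1)) ∂μ₀ :=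
            (setLIntegral_const _ _).symm
        _ ≤ ∫⁻ y in ball xs r, ENNReal.ofReal (Real.exp (-Φ y)) ∂μ₀ := by
            refine setLIntegral_mono' measurableSet_ball fun y hy => ?_
            refine ENNReal.ofReal_le_ofReal (Real.exp_le_exp.2 ?_)
            have h1 : ENNReal.ofReal (dist (Φ y) (Φ xs)) ≤ 1 :=
              le_of_lt <| lt_of_le_of_lt
                (le_trans (hωsb y) (hωsm _ _ dist_nonneg (le_of_lt hy))) hrs
            have h2 : |Φ y - Φ xs| ≤ 1 := by
              rw [Real.dist_eq] at h1
              exact ENNReal.ofReal_le_one.1 h1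
            linarith [abs_le.1 h2]
    calc μ (ball x r) / μ (ball xs r)
        ≤ (Z⁻¹ * (ENNReal.ofReal (Real.exp (1 - Φ x)) * μ₀ (ball x r))) /
            (Z⁻¹ * (ENNReal.ofReal (Real.exp (-Φ xs - 1)) * μ₀ (ball xs r))) :=
          ENNReal.div_le_div hup hlo
      _ = (ENNReal.ofReal (Real.exp (1 - Φ x)) * μ₀ (ball x r)) /
            (ENNReal.ofReal (Real.exp (-Φ xs - 1)) * μ₀ (ball xs r)) :=
          ENNReal.mul_div_mul_left _ _ (ENNReal.inv_ne_zero.2 hZtop.ne)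
            (ENNReal.inv_ne_top.2 hZ0.ne')
      _ = (C * (ENNReal.ofReal (Real.exp (-Φ xs - 1)) * μ₀ (ball x r))) /
            (ENNReal.ofReal (Real.exp (-Φ xs - 1)) * μ₀ (ball xs r)) := by
          congr 1
          rw [hC, ← mul_assoc, ← ENNReal.ofReal_mul (Real.exp_nonneg _), ← Real.exp_add]
          ring_nf
      _ = C * ((ENNReal.ofReal (Real.exp (-Φ xs - 1)) * μ₀ (ball x r)) /
            (ENNReal.ofReal (Real.exp (-Φ xs - 1)) * μ₀ (ball xs r))) := by
          rw [mul_div_assoc]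
      _ = C * (μ₀ (ball x r) / μ₀ (ball xs r)) := by
          rw [ENNReal.mul_div_mul_left _ _
            (ENNReal.ofReal_pos.2 (Real.exp_pos _)).ne' ENNReal.ofReal_ne_top]
  have hmul : Tendsto (fun r : ℝ => C * (μ₀ (ball x r) / μ₀ (ball xs r))) (𝓝[>] 0) (𝓝 0) := by
    have := ENNReal.Tendsto.const_mul (hxs x hx) (Or.inr hCne)
    rwa [mul_zero] at this
  exact tendsto_of_tendsto_of_tendsto_of_le_of_le' tendsto_const_nhds hmul
    (Eventually.of_forall fun _ => zero_le) key
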